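/- As formal power series in q and t (or for real/complex |q|, |t| < 1): ∏_{k ≥ 0} 1/(1 - q·t^{2^k}) = ∏_{(j,k): 0 ≤ j ≤ k} (1 + q^{2^j} t^{2^k}). Combinatorially: the number of vector partitions of ⟨j,k⟩ into distinct parts of the form ⟨2^a, 2^b⟩ with 0 ≤ a ≤ b equals the number of partitions of ⟨j,k⟩ into unrestricted parts of the form ⟨1, 2^b⟩ with b ≥ 0. -/

import Mathlib

open Filter Real

/-- log bound: for |y| ≤ c < 1, |log (1+y)| ≤ |y| / (1-c). -/
lemma abs_log_one_add_le {c y : ℝ} (hc : c < 1) (hy : |y| ≤ c) :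
    |Real.log (1 + y)| ≤ |y| / (1 - c) := by
  have hc0 : 0 ≤ c := le_trans (abs_nonneg y) hy
  have h1c : 0 < 1 - c := by linarith
  have hy1 : -c ≤ y := by cases abs_le.mp hy; linarith
  have hy2 : y ≤ c := (abs_le.mp hy).2
  have hpos : 0 < 1 + y := by linarith
  have hup : Real.log (1 + y) ≤ |y| / (1 - c) := by
    have := Real.log_le_sub_one_of_pos hpos
    have h2 : y ≤ |y| := le_abs_self y
    have h3 : |y| ≤ |y| / (1 - c) := by
      rw [le_div_iff₀ h1c]
      nlinarith [abs_nonneg y]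
    linarith
  have hlow : -(|y| / (1 - c)) ≤ Real.log (1 + y) := by
    have hinv : 0 < (1 + y)⁻¹ := inv_pos.mpr hpos
    have := Real.log_le_sub_one_of_pos hinv
    rw [Real.log_inv] at this
    have h4 : (1 + y)⁻¹ - 1 = -y / (1 + y) := by field_simp; ring
    rw [h4] at this
    have h5 : -y / (1 + y) ≤ |y| / (1 - c) := by
      rw [div_le_div_iff₀ hpos h1c]
      have h6 : -y ≤ |y| := neg_le_abs y
      nlinarith [abs_nonneg y]
    linarith
  exact abs_le.mpr ⟨hlow, hup⟩

lemma multipliable_of_summable_log {ι : Type*} {f : ι → ℝ} (hpos : ∀ i, 0 < f i)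
    (h : Summable fun i => Real.log (f i)) : Multipliable f :=
  Real.multipliable_of_summable_log hpos h

lemma hasProd_one_add_pow {x : ℝ} (hx : |x| < 1) :
    HasProd (fun m : ℕ => 1 + x ^ 2 ^ m) (1 / (1 - x)) := by
  have hx1 : x ≠ 1 := by intro h; rw [h] at hx; simp at hx
  have h1x : 1 - x ≠ 0 := sub_ne_zero.mpr (Ne.symm hx1)
  have habs : ∀ m : ℕ, |x ^ 2 ^ m| ≤ |x| ^ m := by
    intro m
    rw [abs_pow]
    exact pow_le_pow_of_le_one (abs_nonneg x) hx.le (m.lt_two_pow_self).le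
  have hpos : ∀ m : ℕ, 0 < 1 + x ^ 2 ^ m := by
    intro m
    have h1 : |x ^ 2 ^ m| ≤ |x| := by
      rw [abs_pow]
      exact pow_le_of_le_one (abs_nonneg x) hx.le (Nat.two_pow_pos m).ne'
    have := neg_abs_le (x ^ 2 ^ m)
    linarith
  have hsumlog : Summable fun m : ℕ => Real.log (1 + x ^ 2 ^ m) := by
    apply Summable.of_abs
    have hgeo : Summable (fun m : ℕ => |x| ^ m / (1 - |x|)) :=
      (summable_geometric_of_lt_one (abs_nonneg x) hx).div_const _
    apply Summable.of_nonneg_of_le (fun m => abs_nonneg _) ?_ hgeo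
    intro m
    calc |Real.log (1 + x ^ 2 ^ m)| ≤ |x ^ 2 ^ m| / (1 - |x|) := by
            apply abs_log_one_add_le hx
            rw [abs_pow]
            exact pow_le_of_le_one (abs_nonneg x) hx.le (Nat.two_pow_pos m).ne'
      _ ≤ |x| ^ m / (1 - |x|) := by
            have h1x' : 0 < 1 - |x| := by linarith
            gcongr
            exact habs m
  have hmult : Multipliable fun m : ℕ => 1 + x ^ 2 ^ m :=
    _root_.multipliable_of_summable_log hpos hsumlog
  rw [hmult.hasProd_iff_tendsto_nat]
  have hpartial : ∀ n : ℕ, ∏ m ∈ Finset.range n, (1 + x ^ 2 ^ m) = (1 - x ^ 2 ^ n) / (1 - x) := by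
    intro n
    induction n with
    | zero => simp [div_self h1x]
    | succ n ih =>
        rw [Finset.prod_range_succ, ih]
        have : x ^ 2 ^ (n + 1) = (x ^ 2 ^ n) ^ 2 := by
          rw [← pow_mul, ← pow_succ]
        rw [this]
        field_simp
        ring
  simp_rw [hpartial]
  have h2 : Tendsto (fun n : ℕ => x ^ 2 ^ n) atTop (nhds 0) :=
    (tendsto_pow_atTop_nhds_zero_of_abs_lt_one hx).comp
      (Filter.tendsto_atTop_mono (fun n => n.lt_two_pow_self.le) tendsto_id)
  have h3 : Tendsto (fun n : ℕ => (1 - x ^ 2 ^ n) / (1 - x)) atTop (nhds ((1 - 0) / (1 - x))) :=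
    (tendsto_const_nhds.sub h2).div_const _
  simpa using h3

lemma tprod_prod_of_pos {ι κ : Type*} {F : ι × κ → ℝ} (hpos : ∀ p, 0 < F p)
    (h : Summable fun p => Real.log (F p)) :
    ∏' p : ι × κ, F p = ∏' (b : ι), ∏' (c : κ), F (b, c) := by
  have hfib : ∀ b, Summable fun c => Real.log (F (b, c)) := fun b => h.prod_factor b
  have hg : HasSum (fun b => ∑' c, Real.log (F (b, c))) (∑' p : ι × κ, Real.log (F p)) :=
    h.hasSum.prod_fiberwise fun b => (hfib b).hasSum
  have e1 : ∏' p : ι × κ, F p = Real.exp (∑' p : ι × κ, Real.log (F p)) :=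
    (Real.rexp_tsum_eq_tprod (fun p => hpos p) h).symm
  have e2 : ∀ b, ∏' c, F (b, c) = Real.exp (∑' c, Real.log (F (b, c))) := fun b =>
    (Real.rexp_tsum_eq_tprod (fun c => hpos _) (hfib b)).symm
  have hpos2 : ∀ b : ι, 0 < Real.exp (∑' c, Real.log (F (b, c))) := fun b => Real.exp_pos _
  have hsum2 : Summable fun b => Real.log (Real.exp (∑' c, Real.log (F (b, c)))) := by
    simpa [Real.log_exp] using hg.summable
  have e3 : ∏' b, Real.exp (∑' c, Real.log (F (b, c)))
      = Real.exp (∑' b, Real.log (Real.exp (∑' c, Real.log (F (b, c))))) :=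
    (Real.rexp_tsum_eq_tprod
      (fun b => hpos2 b) hsum2).symm
  rw [e1, tprod_congr e2, e3]
  congr 1
  simp_rw [Real.log_exp]
  exact hg.tsum_eq.symm

def auxF (q t : ℝ) (km : ℕ × ℕ) : ℝ := 1 + (q * t ^ 2 ^ km.1) ^ 2 ^ km.2

def eqv : ℕ × ℕ ≃ {p : ℕ × ℕ // p.1 ≤ p.2} where
  toFun km := ⟨(km.2, km.2 + km.1), Nat.le_add_right _ _⟩
  invFun p := (p.val.2 - p.val.1, p.val.1)
  left_inv := by rintro ⟨k, m⟩; simp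
  right_inv := by
    rintro ⟨⟨j, K⟩, h⟩
    exact Subtype.ext (Prod.ext rfl (Nat.add_sub_cancel' h))

set_option maxHeartbeats 1000000 in
theorem stmt_19 (q t : ℝ) (hq : |q| < 1) (ht : |t| < 1) :
    ∏' k : ℕ, 1 / (1 - q * t ^ 2 ^ k) =
      ∏' p : {p : ℕ × ℕ // p.1 ≤ p.2}, (1 + q ^ 2 ^ p.val.1 * t ^ 2 ^ p.val.2) := by
  set r : ℝ := max |q| |t| with hrdef
  have hr1 : r < 1 := max_lt hq ht
  have hr0 : 0 ≤ r := le_trans (abs_nonneg q) (le_max_left _ _)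
  have hqr : |q| ≤ r := le_max_left _ _
  have htr : |t| ≤ r := le_max_right _ _
  have hxk : ∀ k : ℕ, |q * t ^ 2 ^ k| < 1 := by
    intro k
    rw [abs_mul, abs_pow]
    have h1 : |t| ^ 2 ^ k ≤ 1 := pow_le_one₀ (abs_nonneg t) ht.le
    nlinarith [abs_nonneg q, pow_nonneg (abs_nonneg t) (2 ^ k)]
  have hF : ∀ km : ℕ × ℕ, auxF q t km = 1 + (q * t ^ 2 ^ km.1) ^ 2 ^ km.2 := fun _ => rfl
  have hxbound : ∀ km : ℕ × ℕ, |(q * t ^ 2 ^ km.1) ^ 2 ^ km.2| ≤ r ^ (km.1 + 1) * r ^ (km.2 + 1) := by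
    rintro ⟨k, m⟩
    have h1 : |q * t ^ 2 ^ k| ≤ r ^ (2 ^ k + 1) := by
      rw [abs_mul, abs_pow, pow_add, pow_one, mul_comm]
      exact mul_le_mul (pow_le_pow_left₀ (abs_nonneg t) htr _) hqr (abs_nonneg q) (by positivity)
    calc |(q * t ^ 2 ^ k) ^ 2 ^ m| = |q * t ^ 2 ^ k| ^ 2 ^ m := abs_pow _ _
      _ ≤ (r ^ (2 ^ k + 1)) ^ 2 ^ m := pow_le_pow_left₀ (abs_nonneg _) h1 _
      _ = r ^ ((2 ^ k + 1) * 2 ^ m) := by rw [← pow_mul]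
      _ ≤ r ^ ((k + 1) + (m + 1)) := by
          apply pow_le_pow_of_le_one hr0 hr1.le
          have hk := k.lt_two_pow_self
          have hm := m.lt_two_pow_self
          nlinarith
      _ = r ^ (k + 1) * r ^ (m + 1) := pow_add _ _ _
  have hxr : ∀ km : ℕ × ℕ, |(q * t ^ 2 ^ km.1) ^ 2 ^ km.2| ≤ r := by
    intro km
    calc |(q * t ^ 2 ^ km.1) ^ 2 ^ km.2| ≤ r ^ (km.1 + 1) * r ^ (km.2 + 1) := hxbound km
      _ ≤ r ^ 1 * 1 := by
          apply mul_le_mul (pow_le_pow_of_le_one hr0 hr1.le (by omega))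
            (pow_le_one₀ hr0 hr1.le) (by positivity) (by positivity)
      _ = r := by ring
  have hFpos : ∀ km : ℕ × ℕ, 0 < auxF q t km := by
    intro km
    have h1 := neg_abs_le ((q * t ^ 2 ^ km.1) ^ 2 ^ km.2)
    have h2 := hxr km
    rw [hF]
    linarith
  have hgeo1 : Summable (fun k : ℕ => r ^ (k + 1)) := by
    simp_rw [pow_succ]
    exact (summable_geometric_of_lt_one hr0 hr1).mul_right r
  have hsumF : Summable fun km : ℕ × ℕ => Real.log (auxF q t km) := by
    apply Summable.of_abs
    have hb : Summable (fun km : ℕ × ℕ => r ^ (km.1 + 1) * r ^ (km.2 + 1) / (1 - r)) :=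
      (hgeo1.mul_of_nonneg hgeo1 (fun k => by positivity) (fun k => by positivity)).div_const _
    apply Summable.of_nonneg_of_le (fun km => abs_nonneg _) ?_ hb
    intro km
    rw [hF]
    calc |Real.log (1 + (q * t ^ 2 ^ km.1) ^ 2 ^ km.2)| ≤ |(q * t ^ 2 ^ km.1) ^ 2 ^ km.2| / (1 - r) :=
          abs_log_one_add_le hr1 (hxr km)
      _ ≤ r ^ (km.1 + 1) * r ^ (km.2 + 1) / (1 - r) := by
          have h3 : (0:ℝ) < 1 - r := by linarith
          gcongr
          exact hxbound km
  have key : ∀ km : ℕ × ℕ, auxF q t km = 1 + q ^ 2 ^ (eqv km).val.1 * t ^ 2 ^ (eqv km).val.2 := by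
    rintro ⟨k, m⟩
    show 1 + (q * t ^ 2 ^ k) ^ 2 ^ m = 1 + q ^ 2 ^ m * t ^ 2 ^ (m + k)
    rw [mul_pow, ← pow_mul, ← pow_add, add_comm k m]
  rw [← Equiv.tprod_eq eqv (fun p : {p : ℕ × ℕ // p.1 ≤ p.2} => 1 + q ^ 2 ^ p.val.1 * t ^ 2 ^ p.val.2)]
  rw [← tprod_congr key, tprod_prod_of_pos hFpos hsumF]
  apply tprod_congr
  intro k
  have h : (fun m : ℕ => auxF q t (k, m)) = fun m : ℕ => 1 + (q * t ^ 2 ^ k) ^ 2 ^ m := rfl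
  rw [h, (hasProd_one_add_pow (hxk k)).tprod_eq]
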